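/- There exists a packing of $K_{3(4)}$ by nine edge-disjoint copies of $K_4-e$ whose leave is a triangle. -/

import Mathlib

open SimpleGraph Finset

/-- `K₄ - e`: the complete graph on `{0,1,2,3}` minus the edge `{2,3}`.
In the block notation `[a,b,c-d]`, `a = 0`, `b = 1`, `c = 2`, `d = 3`. -/
def K4e : SimpleGraph (Fin 4) where
  Adj x y := x ≠ y ∧ ¬(x = 2 ∧ y = 3) ∧ ¬(x = 3 ∧ y = 2)
  symm := by
    constructor
    intro x y h
    exact ⟨h.1.symm, fun hc => h.2.2 ⟨hc.2, hc.1⟩, fun hc => h.2.1 ⟨hc.2, hc.1⟩⟩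
  loopless := ⟨fun x h => h.1 rfl⟩

instance : DecidableRel K4e.Adj :=
  fun x y => inferInstanceAs (Decidable (x ≠ y ∧ ¬(x = 2 ∧ y = 3) ∧ ¬(x = 3 ∧ y = 2)))

/-- The edge set of the copy of `K₄ - e` with vertices `f 0, f 1, f 2, f 3`. -/
def copyEdges {V : Type*} (f : Fin 4 → V) : Set (Sym2 V) :=
  Sym2.map f '' K4e.edgeSet

/-- `B` is a packing of `H` by edge-disjoint copies of `K₄ - e`. -/
def IsK4ePacking {V : Type*} (H : SimpleGraph V) (B : Finset (Fin 4 → V)) : Prop :=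
  (∀ f ∈ B, Function.Injective f) ∧
  (∀ f ∈ B, copyEdges f ⊆ H.edgeSet) ∧
  (∀ f ∈ B, ∀ g ∈ B, f ≠ g → Disjoint (copyEdges f) (copyEdges g))

/-- The leave of a packing: the edges of `H` covered by no copy. -/
def leave {V : Type*} (H : SimpleGraph V) (B : Finset (Fin 4 → V)) : Set (Sym2 V) :=
  H.edgeSet \ ⋃ f ∈ B, copyEdges f

/-- `B` is a decomposition of `H` into edge-disjoint copies of `K₄ - e`. -/
def IsK4eDecomp {V : Type*} (H : SimpleGraph V) (B : Finset (Fin 4 → V)) : Prop :=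
  IsK4ePacking H B ∧ ∀ e ∈ H.edgeSet, ∃ f ∈ B, e ∈ copyEdges f

/-- The complete tripartite graph with parts `{i, i+3, i+6, i+9}`, `0 ≤ i ≤ 2`, on `Fin 12`. -/
def K3x4 : SimpleGraph (Fin 12) where
  Adj x y := x.val % 3 ≠ y.val % 3
  symm := ⟨fun _ _ h => h.symm⟩
  loopless := ⟨fun _ h => h rfl⟩

set_option maxRecDepth 20000

instance : DecidableRel K3x4.Adj := fun x y => inferInstanceAs (Decidable (x.val % 3 ≠ y.val % 3))

def myL : List (Fin 4 → Fin 12) :=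
  [![4,5,0,6], ![3,4,2,8], ![6,7,2,11], ![7,8,0,9], ![3,5,1,7],
   ![10,11,0,3], ![9,11,1,4], ![9,10,2,5], ![6,8,1,10]]

def myB : Finset (Fin 4 → Fin 12) := myL.toFinset

lemma mem_copyEdges {V : Type*} (f : Fin 4 → V) (x : Sym2 V) :
    x ∈ copyEdges f ↔ ∃ i j : Fin 4, K4e.Adj i j ∧ s(f i, f j) = x := by
  simp [copyEdges, Set.mem_image, Sym2.exists, SimpleGraph.mem_edgeSet, Sym2.map_pair_eq]

lemma ball_of_all {α : Type*} {l : List α} {p : α → Prop} [DecidablePred p]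
    (h : l.all (fun a => decide (p a)) = true) : ∀ a ∈ l, p a :=
  fun a ha => of_decide_eq_true (List.all_eq_true.mp h a ha)

theorem stmt12 :
    ∃ B : Finset (Fin 4 → Fin 12), B.card = 9 ∧ IsK4ePacking K3x4 B ∧
      ∃ x y z : Fin 12, x ≠ y ∧ y ≠ z ∧ x ≠ z ∧
        leave K3x4 B = {s(x, y), s(y, z), s(x, z)} := by
  have key0 : ∀ f ∈ myL, ∀ i j : Fin 4, f i = f j → i = j :=
    ball_of_all (by decide)
  have key1 : ∀ f ∈ myL, ∀ i j : Fin 4, K4e.Adj i j → K3x4.Adj (f i) (f j) :=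
    ball_of_all (by decide)
  have key2 : ∀ f ∈ myL, ∀ g ∈ myL, f ≠ g → ∀ i j k l : Fin 4,
      K4e.Adj i j → K4e.Adj k l →
      ¬((f i = g k ∧ f j = g l) ∨ (f i = g l ∧ f j = g k)) := by
    have h2 : myL.all (fun f => myL.all (fun g => decide (f ≠ g → ∀ i j k l : Fin 4,
        K4e.Adj i j → K4e.Adj k l →
        ¬((f i = g k ∧ f j = g l) ∨ (f i = g l ∧ f j = g k))))) = true := by decide
    intro f hf g hg
    exact of_decide_eq_true (List.all_eq_true.mp (List.all_eq_true.mp h2 f hf) g hg)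
  refine ⟨myB, by decide, ⟨?_, ?_, ?_⟩, 0, 1, 2, by decide, by decide, by decide, ?_⟩
  · intro f hf
    rw [myB, List.mem_toFinset] at hf
    exact fun {i j} => key0 f hf i j
  · intro f hf x hx
    rw [myB, List.mem_toFinset] at hf
    rw [mem_copyEdges] at hx
    obtain ⟨i, j, hij, rfl⟩ := hx
    exact (K3x4.mem_edgeSet).2 (key1 f hf i j hij)
  · intro f hf g hg hne
    rw [myB, List.mem_toFinset] at hf hg
    rw [Set.disjoint_left]
    intro x hx hx'
    rw [mem_copyEdges] at hx hx'
    obtain ⟨i, j, hij, rfl⟩ := hx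
    obtain ⟨k, l, hkl, he⟩ := hx'
    exact key2 f hf g hg hne i j k l hij hkl (Sym2.eq_iff.mp he.symm)
  · rw [Set.ext_iff, Sym2.forall]
    intro u v
    simp only [leave, Set.mem_diff, Set.mem_iUnion, exists_prop, mem_copyEdges,
      SimpleGraph.mem_edgeSet, Sym2.eq_iff, Set.mem_insert_iff, Set.mem_singleton_iff,
      myB, List.mem_toFinset, myL, List.mem_cons, List.not_mem_nil, or_false,
      exists_eq_or_imp, exists_eq_left, false_and, exists_false]
    revert u v
    set_option synthInstance.maxSize 4000 in
    set_option synthInstance.maxHeartbeats 1000000 in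
    set_option maxHeartbeats 2000000 in
    decide
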